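/- arXiv:2410.05009 — 2 statements merged into one kernel-verified Lean document; each statement's English description precedes it below -/
import Mathlib

section
/- Let ψ : ℝ × (0,∞) → ℝ be defined by ψ(η₁,η₂) = ½η₁² + ¼ η₂ ln η₂. Then the matrix of second partial derivatives of ψ at (η₁,η₂) is diag(1, 1/(4η₂)), and for all x ∈ ℝ and y > 0, with J(x,y) = diag(1, 2y) the Jacobian matrix of the map (x,y) ↦ (x, y²), one has J(x,y)ᵀ · Hess ψ(x, y²) · J(x,y) equal to the 2×2 identity matrix; i.e. (x, y²) are Hessian coordinates for the Euclidean plane with Hessian potential ψ. (This is the second Smorodinski–Winternitz system (ii).) -/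
open Real Set Matrix

/-- The Hessian potential of the second Smorodinski–Winternitz system (ii)
in its Hessian coordinates. -/
noncomputable def ψ (a b : ℝ) : ℝ := a ^ 2 / 2 + b * log b / 4

/-- Partial derivative with respect to the first variable. -/
noncomputable def d1 (f : ℝ → ℝ → ℝ) (a b : ℝ) : ℝ := deriv (fun s => f s b) a

/-- Partial derivative with respect to the second variable. -/
noncomputable def d2 (f : ℝ → ℝ → ℝ) (a b : ℝ) : ℝ := deriv (fun t => f a t) b

/-- The matrix of second partial derivatives of a function of two variables. -/
noncomputable def Hess (f : ℝ → ℝ → ℝ) (a b : ℝ) : Matrix (Fin 2) (Fin 2) ℝ :=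
  !![d1 (d1 f) a b, d1 (d2 f) a b;
     d2 (d1 f) a b, d2 (d2 f) a b]

/-- The Jacobian matrix of the coordinate change `(x,y) ↦ (x, y²)`. -/
noncomputable def J (x y : ℝ) : Matrix (Fin 2) (Fin 2) ℝ := !![1, 0; 0, 2 * y]

lemma hd1 : ∀ a b : ℝ, d1 ψ a b = a := by
  intro a b; simp [d1, ψ, deriv_add_const, deriv_div_const]

lemma hd2 : ∀ a b : ℝ, d2 ψ a b = deriv (fun t => t * log t) b / 4 := by
  intro a b; simp [d2, ψ, deriv_const_add]

lemma h11 (a b : ℝ) : d1 (d1 ψ) a b = 1 := by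
  show deriv (fun s => d1 ψ s b) a = 1
  rw [show (fun s => d1 ψ s b) = fun s => s from funext fun s => hd1 s b]
  simp

lemma h21 (a b : ℝ) : d2 (d1 ψ) a b = 0 := by
  show deriv (fun t => d1 ψ a t) b = 0
  rw [show (fun t => d1 ψ a t) = fun _ => a from funext fun t => hd1 a t]
  simp

lemma h12 (a b : ℝ) : d1 (d2 ψ) a b = 0 := by
  show deriv (fun s => d2 ψ s b) a = 0
  rw [show (fun s => d2 ψ s b) = fun _ => deriv (fun t => t * log t) b / 4 from
    funext fun s => hd2 s b]
  simp

lemma h22 (a b : ℝ) (hb : 0 < b) : d2 (d2 ψ) a b = 1 / (4 * b) := by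
  show deriv (fun t => d2 ψ a t) b = 1 / (4 * b)
  rw [show (fun t => d2 ψ a t) = fun t => deriv (fun u => u * log u) t / 4 from
    funext fun t => hd2 a t]
  have hev : (fun t => deriv (fun u => u * log u) t / 4) =ᶠ[nhds b]
      (fun t => (log t + 1) / 4) := by
    filter_upwards [eventually_ne_nhds hb.ne'] with t ht
    rw [(Real.hasDerivAt_mul_log ht).deriv]
  rw [hev.deriv_eq]
  have : HasDerivAt (fun t : ℝ => (log t + 1) / 4) (b⁻¹ / 4) b :=
    (((Real.hasDerivAt_log hb.ne').add_const 1).div_const 4)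
  rw [this.deriv]
  field_simp

/-- For `ψ(η₁,η₂) = ½η₁² + ¼η₂ ln η₂`, the matrix of second partial derivatives
is `diag(1, 1/(4η₂))`, and `(x, y²)` are Hessian coordinates for the Euclidean
plane with Hessian potential `ψ`: `J(x,y)ᵀ · Hess ψ(x,y²) · J(x,y) = I₂`. -/
theorem sw_ii_hessian_coordinates :
    (∀ a b : ℝ, 0 < b → Hess ψ a b = !![1, 0; 0, 1 / (4 * b)]) ∧
    ∀ x y : ℝ, 0 < y →
      (J x y)ᵀ * Hess ψ x (y ^ 2) * J x y = 1 := by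
  have hH : ∀ a b : ℝ, 0 < b → Hess ψ a b = !![1, 0; 0, 1 / (4 * b)] := by
    intro a b hb
    rw [Hess, h11, h12, h21, h22 a b hb]
  refine ⟨hH, fun x y hy => ?_⟩
  rw [hH x (y ^ 2) (by positivity)]
  have hJ : (J x y)ᵀ = !![1, 0; 0, 2 * y] := by
    rw [_root_.J]; ext i j; fin_cases i <;> fin_cases j <;> simp
  rw [hJ, _root_.J, Matrix.mul_fin_two, Matrix.mul_fin_two, Matrix.one_fin_two]
  have hy : y ≠ 0 := hy.ne'
  ext i j
  fin_cases i <;> fin_cases j <;> simp <;> field_simp <;> ring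
end

section
/- There exist no real constants c₀, c₁, c₂ such that −¼ ln(1 − η₁ − η₂) = ¼(η₁ ln η₁ + η₂ ln η₂ + (1 − η₁ − η₂) ln(1 − η₁ − η₂)) + c₁η₁ + c₂η₂ + c₀ holds for all (η₁,η₂) in the open simplex {η₁ > 0, η₂ > 0, η₁ + η₂ < 1}. (Hence the Hessian structure associated with the generic system (s2) on the round 2-sphere is not self-dual.) -/
open Real

/-- The Hessian structure of the generic system (s2) on the round 2-sphere is
not self-dual: on the open simplex, the dual Hessian potential
`−¼ ln(1 − η₁ − η₂)` does not coincide with the Hessian potential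
`¼(η₁ ln η₁ + η₂ ln η₂ + (1 − η₁ − η₂) ln(1 − η₁ − η₂))` up to terms affine in
the Hessian coordinates. -/
theorem s2_not_self_dual :
    ¬ ∃ c₀ c₁ c₂ : ℝ, ∀ a b : ℝ, 0 < a → 0 < b → a + b < 1 →
      -(1 / 4) * log (1 - a - b) =
        (a * log a + b * log b + (1 - a - b) * log (1 - a - b)) / 4
          + c₁ * a + c₂ * b + c₀ := by
  rintro ⟨c₀, c₁, c₂, h⟩
  have h1 := h (1/3) (1/3) (by norm_num) (by norm_num) (by norm_num)
  have h2 := h (1/4) (1/4) (by norm_num) (by norm_num) (by norm_num)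
  have h3 := h (1/8) (1/8) (by norm_num) (by norm_num) (by norm_num)
  norm_num at h1 h2 h3
  have l3 : log (1/3 : ℝ) = -log 3 := by
    rw [one_div, Real.log_inv]
  have l2 : log (1/2 : ℝ) = -log 2 := by
    rw [one_div, Real.log_inv]
  have l4 : log (1/4 : ℝ) = -(2 * log 2) := by
    rw [one_div, Real.log_inv, show (4:ℝ) = 2^2 by norm_num, Real.log_pow]
    push_cast; ring
  have l8 : log (1/8 : ℝ) = -(3 * log 2) := by
    rw [one_div, Real.log_inv, show (8:ℝ) = 2^3 by norm_num, Real.log_pow]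
    push_cast; ring
  have l34 : log (3/4 : ℝ) = log 3 - 2 * log 2 := by
    rw [Real.log_div (by norm_num) (by norm_num),
      show (4:ℝ) = 2^2 by norm_num, Real.log_pow]
    push_cast; ring
  rw [l3] at h1
  rw [l4, l2] at h2
  rw [l8, l34] at h3
  have key : (5:ℝ) * log 3 = 8 * log 2 := by linarith
  have : Real.log 243 = Real.log 256 := by
    rw [show (243:ℝ) = 3^5 by norm_num, show (256:ℝ) = 2^8 by norm_num,
      Real.log_pow, Real.log_pow]
    push_cast; linarith
  have h243 : ((243:ℝ)) = 256 := by
    have := congrArg Real.exp this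
    rwa [Real.exp_log (by norm_num), Real.exp_log (by norm_num)] at this
  norm_num at h243
end
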